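/- Let G be a split graph whose vertex set is partitioned into an independent set S and a clique K, and assume K is a maximum clique of G, i.e., |K| = ω(G), where ω(G) is the clique number of G. Then Tr_st(G) ≥ ω(G). -/

import Mathlib

namespace StrongTrans

variable {V : Type*}

noncomputable def deg (G : SimpleGraph V) (v : V) : ℕ := Nat.card {w // G.Adj v w}

def Dominates (G : SimpleGraph V) (A B : Set V) : Prop :=
  ∀ y ∈ B, ∃ x ∈ A, G.Adj x y

def StronglyDominates (G : SimpleGraph V) (A B : Set V) : Prop :=
  ∀ y ∈ B, ∃ x ∈ A, G.Adj x y ∧ deg G y ≤ deg G x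

structure IsTransitivePartition (G : SimpleGraph V) {k : ℕ} (P : Fin k → Set V) : Prop where
  nonempty : ∀ i, (P i).Nonempty
  pairwiseDisjoint : ∀ i j, i ≠ j → Disjoint (P i) (P j)
  covers : ∀ v, ∃ i, v ∈ P i
  dominates : ∀ i j, i < j → Dominates G (P i) (P j)

structure IsStrongTransitivePartition (G : SimpleGraph V) {k : ℕ} (P : Fin k → Set V) : Prop where
  nonempty : ∀ i, (P i).Nonempty
  pairwiseDisjoint : ∀ i j, i ≠ j → Disjoint (P i) (P j)
  covers : ∀ v, ∃ i, v ∈ P i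
  stronglyDominates : ∀ i j, i < j → StronglyDominates G (P i) (P j)

noncomputable def transitivity (G : SimpleGraph V) : ℕ :=
  sSup {k | ∃ P : Fin k → Set V, IsTransitivePartition G P}

noncomputable def strongTransitivity (G : SimpleGraph V) : ℕ :=
  sSup {k | ∃ P : Fin k → Set V, IsStrongTransitivePartition G P}

def IsIndepSet (G : SimpleGraph V) (S : Set V) : Prop :=
  S.Pairwise fun a b => ¬ G.Adj a b

lemma bddAbove_aux [Fintype V] (G : SimpleGraph V) :
    BddAbove {k | ∃ P : Fin k → Set V, IsStrongTransitivePartition G P} := by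
  refine ⟨Fintype.card V, fun n hn => ?_⟩
  obtain ⟨P, hP⟩ := hn
  choose g hg using hP.nonempty
  have hinj : Function.Injective g := by
    intro i j hij
    by_contra hne
    exact Set.disjoint_left.mp (hP.pairwiseDisjoint i j hne) (hg i) (hij ▸ hg j)
  simpa using Fintype.card_le_of_injective g hinj

theorem cliqueNum_le_strongTransitivity_of_split
    (V : Type*) [Fintype V] (G : SimpleGraph V) (S K : Set V)
    (hdisj : Disjoint S K) (hcover : S ∪ K = Set.univ)
    (hS : IsIndepSet G S) (hK : G.IsClique K)
    (hmax : K.ncard = G.cliqueNum) :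
    G.cliqueNum ≤ strongTransitivity G := by
  classical
  rcases K.eq_empty_or_nonempty with hKe | hKne
  · rw [← hmax, hKe]; simp
  rw [← hmax]
  set k := K.ncard with hk
  have hkpos : 0 < k := by
    rw [hk]
    exact Set.Nonempty.ncard_pos (Set.toFinite K) hKne
  -- enumerate K sorted by decreasing degree
  set l : List V := ((K.toFinite.toFinset).toList.mergeSort
    (fun a b => decide (deg G b ≤ deg G a))) with hl
  have hperm : l.Perm (K.toFinite.toFinset).toList := List.mergeSort_perm _ _
  have hnodup : l.Nodup := hperm.nodup_iff.mpr (Finset.nodup_toList _)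
  have hlen : l.length = k := by
    rw [hperm.length_eq, Finset.length_toList, hk, Set.ncard_eq_toFinset_card _ K.toFinite]
  have hsorted : List.Pairwise (fun a b => decide (deg G b ≤ deg G a) = true) l := by
    apply List.pairwise_mergeSort
    · intro a b c hab hbc
      simp only [decide_eq_true_eq] at *
      exact le_trans hbc hab
    · intro a b
      simp only [Bool.or_eq_true, decide_eq_true_eq]
      exact le_total _ _
  have hmemK : ∀ x, x ∈ l ↔ x ∈ K := by
    intro x
    rw [hperm.mem_iff, Finset.mem_toList, Set.Finite.mem_toFinset]
  set v : Fin k → V := fun i => l.get (Fin.cast hlen.symm i) with hv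
  have hvK : ∀ i, v i ∈ K := fun i => (hmemK _).mp (l.get_mem _)
  have hvinj : Function.Injective v := by
    intro i j hij
    have := (hnodup.get_inj_iff).mp hij
    exact Fin.cast_injective hlen.symm this
  have hvmono : ∀ i j : Fin k, i < j → deg G (v j) ≤ deg G (v i) := by
    intro i j hij
    have := List.Pairwise.rel_get_of_lt (l := l) hsorted
      (a := Fin.cast hlen.symm i) (b := Fin.cast hlen.symm j) hij
    simpa [hv] using this
  have hvsurj : ∀ x ∈ K, ∃ i, v i = x := by
    intro x hx
    obtain ⟨i, hi⟩ := List.get_of_mem ((hmemK x).mpr hx)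
    exact ⟨Fin.cast hlen i, hi⟩
  set P : Fin k → Set V := fun i => if i = ⟨0, hkpos⟩ then insert (v ⟨0, hkpos⟩) S else {v i} with hP
  have hvmem : ∀ i, v i ∈ P i := by
    intro i
    by_cases h : i = ⟨0, hkpos⟩ <;> simp [hP, h]
  have hadj : ∀ i j : Fin k, i ≠ j → G.Adj (v i) (v j) := by
    intro i j hij
    exact hK (hvK i) (hvK j) (fun h => hij (hvinj h))
  refine le_csSup (bddAbove_aux G) ⟨P, ?_, ?_, ?_, ?_⟩
  · intro i; exact ⟨v i, hvmem i⟩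
  · intro i j hij
    rw [Set.disjoint_left]
    intro x hxi hxj
    by_cases hi : i = ⟨0, hkpos⟩
    · subst hi
      have hj : j ≠ ⟨0, hkpos⟩ := fun h => hij h.symm
      simp only [hP, if_pos rfl, if_neg hj, Set.mem_singleton_iff] at hxi hxj
      subst hxj
      rcases hxi with h | h
      · exact hij (hvinj h.symm)
      · exact Set.disjoint_left.mp hdisj h (hvK j)
    · by_cases hj : j = ⟨0, hkpos⟩
      · subst hj
        simp only [hP, if_pos rfl, if_neg hi, Set.mem_singleton_iff] at hxi hxj
        subst hxi
        rcases hxj with h | h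
        · exact hij (hvinj h)
        · exact Set.disjoint_left.mp hdisj h (hvK i)
      · simp only [hP, if_neg hi, if_neg hj, Set.mem_singleton_iff] at hxi hxj
        exact hij (hvinj (hxi ▸ hxj ▸ rfl))
  · intro x
    have hx : x ∈ S ∪ K := hcover ▸ Set.mem_univ x
    rcases hx with hx | hx
    · exact ⟨⟨0, hkpos⟩, by simp [hP, hx]⟩
    · obtain ⟨i, hi⟩ := hvsurj x hx
      exact ⟨i, hi ▸ hvmem i⟩
  · intro i j hij y hy
    refine ⟨v i, hvmem i, ?_⟩
    have hj : j ≠ ⟨0, hkpos⟩ := by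
      intro h
      rw [h] at hij
      exact absurd hij (by simp [Fin.lt_def])
    simp only [hP, if_neg hj, Set.mem_singleton_iff] at hy
    subst hy
    exact ⟨hadj i j (ne_of_lt hij), hvmono i j hij⟩

end StrongTrans
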